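/- Let E be a real normed vector space, let F, F̂ : E → E, let α, α̃ ≥ 0 and ζ, μ ≥ 0. Suppose F is Lipschitz with constant α, F̂ is Lipschitz with constant α̃, and ‖F̂(x) − F(x)‖ ≤ ζ for all x ∈ E. Let x, ν, ν̂ : ℕ → E be sequences with x_{j+1} = F(x_j) for all j, set y_j := x_j + ν_j, and suppose ‖ν̂_j − ν_j‖ ≤ μ for all j. Then for all natural numbers j and i, the i-step prediction error η_{j,i} := F̂^i(y_j − ν̂_j) + ν̂_{j+i} − y_{j+i} satisfies ‖η_{j,i}‖ ≤ ζ · ∑_{k=0}^{i−1} α^k + (α̃^i + 1) · μ. -/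

import Mathlib

/-- Main error bound of Appendix A: the `i`-step prediction error satisfies
`‖η_{j,i}‖ ≤ ζ ∑_{k=0}^{i−1} α^k + (alphat^i + 1) μ`. -/
theorem prediction_error_bound
    {E : Type*} [NormedAddCommGroup E] [NormedSpace ℝ E]
    (F Fhat : E → E) (α alphat ζ μ : ℝ)
    (hα : 0 ≤ α) (halphat : 0 ≤ alphat) (hζ : 0 ≤ ζ) (hμ : 0 ≤ μ)
    (hLipF : ∀ u v : E, ‖F u - F v‖ ≤ α * ‖u - v‖)
    (hLipFhat : ∀ u v : E, ‖Fhat u - Fhat v‖ ≤ alphat * ‖u - v‖)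
    (happrox : ∀ x : E, ‖Fhat x - F x‖ ≤ ζ)
    (x ν nuhat : ℕ → E)
    (htraj : ∀ j : ℕ, x (j + 1) = F (x j))
    (hnoise : ∀ j : ℕ, ‖nuhat j - ν j‖ ≤ μ) :
    ∀ j i : ℕ,
      ‖Fhat^[i] ((x j + ν j) - nuhat j) + nuhat (j + i) - (x (j + i) + ν (j + i))‖ ≤
        ζ * ∑ k ∈ Finset.range i, α ^ k + (alphat ^ i + 1) * μ := by
  -- auxiliary bounds
  have hlip : ∀ (i : ℕ) (u v : E), ‖Fhat^[i] u - Fhat^[i] v‖ ≤ alphat ^ i * ‖u - v‖ := by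
    intro i
    induction i with
    | zero => intro u v; simp
    | succ n ih =>
      intro u v
      rw [Function.iterate_succ_apply', Function.iterate_succ_apply']
      calc ‖Fhat (Fhat^[n] u) - Fhat (Fhat^[n] v)‖
          ≤ alphat * ‖Fhat^[n] u - Fhat^[n] v‖ := hLipFhat _ _
        _ ≤ alphat * (alphat ^ n * ‖u - v‖) := by
            exact mul_le_mul_of_nonneg_left (ih u v) halphat
        _ = alphat ^ (n + 1) * ‖u - v‖ := by ring
  have happ : ∀ (i : ℕ) (v : E),
      ‖Fhat^[i] v - F^[i] v‖ ≤ ζ * ∑ k ∈ Finset.range i, α ^ k := by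
    intro i
    induction i with
    | zero => intro v; simp
    | succ n ih =>
      intro v
      rw [Function.iterate_succ_apply', Function.iterate_succ_apply']
      have h1 : ‖Fhat (Fhat^[n] v) - F (F^[n] v)‖
          ≤ ‖Fhat (Fhat^[n] v) - F (Fhat^[n] v)‖ + ‖F (Fhat^[n] v) - F (F^[n] v)‖ := by
        have := norm_add_le (Fhat (Fhat^[n] v) - F (Fhat^[n] v)) (F (Fhat^[n] v) - F (F^[n] v))
        simpa using this
      have h2 : ‖F (Fhat^[n] v) - F (F^[n] v)‖ ≤ α * (ζ * ∑ k ∈ Finset.range n, α ^ k) :=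
        le_trans (hLipF _ _) (mul_le_mul_of_nonneg_left (ih v) hα)
      have h3 := happrox (Fhat^[n] v)
      have hsum : ζ * ∑ k ∈ Finset.range (n + 1), α ^ k
          = ζ + α * (ζ * ∑ k ∈ Finset.range n, α ^ k) := by
        rw [geom_sum_succ]; ring
      rw [hsum]
      linarith
  have hx : ∀ (j i : ℕ), x (j + i) = F^[i] (x j) := by
    intro j i
    induction i with
    | zero => simp
    | succ n ih =>
      rw [← Nat.add_assoc, htraj, ih, Function.iterate_succ_apply']
  intro j i
  have key : ‖Fhat^[i] ((x j + ν j) - nuhat j) + nuhat (j + i) - (x (j + i) + ν (j + i))‖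
      ≤ ‖Fhat^[i] ((x j + ν j) - nuhat j) - Fhat^[i] (x j)‖
        + ‖Fhat^[i] (x j) - F^[i] (x j)‖ + ‖nuhat (j + i) - ν (j + i)‖ := by
    have heq : Fhat^[i] ((x j + ν j) - nuhat j) + nuhat (j + i) - (x (j + i) + ν (j + i))
        = (Fhat^[i] ((x j + ν j) - nuhat j) - Fhat^[i] (x j))
          + (Fhat^[i] (x j) - F^[i] (x j)) + (nuhat (j + i) - ν (j + i)) := by
      rw [hx j i]; abel
    rw [heq]
    exact norm_add₃_le
  have h1 : ‖Fhat^[i] ((x j + ν j) - nuhat j) - Fhat^[i] (x j)‖ ≤ alphat ^ i * μ := by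
    refine le_trans (hlip i _ _) (mul_le_mul_of_nonneg_left ?_ (pow_nonneg halphat i))
    have : (x j + ν j) - nuhat j - x j = -(nuhat j - ν j) := by abel
    rw [this, norm_neg]
    exact hnoise j
  have h2 := happ i (x j)
  have h3 := hnoise (j + i)
  have : (alphat ^ i + 1) * μ = alphat ^ i * μ + μ := by ring
  linarith
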